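/- Every total function Σ* → Γ* computed by an aperiodic sequential transducer with exactly 2 states can be computed by a planar reversible two-way finite transducer. Moreover, such a planar reversible transducer exists with exactly 5 states. -/

import Mathlib

namespace Planar2DFT

/-- Tape alphabet: input letters plus the two endmarkers `▷` and `◁`. -/
inductive Tape (A : Type) where
  | lend : Tape A
  | rend : Tape A
  | sym  : A → Tape A

/-- Edges of the transition profile `G(ρ, f)` on vertices `Q × Bool`
(`true` codes direction `+1`, `false` codes `-1`): an edge
`(q, -ρ q) → (r, ρ r)` for every `(q, r) ∈ f`. -/
def ProfileEdge {Q : Type} (ρ : Q → Bool) (f : Set (Q × Q)) :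
    Q × Bool → Q × Bool → Prop :=
  fun u v => ∃ p ∈ f, u = (p.1, !ρ p.1) ∧ v = (p.2, ρ p.2)

/-- The extension of a strict order on `Q` to `Q × Bool`:
`(q,i) < (r,j)` iff (`i = -1` and `j = 1`), or (`q < r` and `i = j = 1`),
or (`q > r` and `i = j = -1`). -/
def ExtLt {Q : Type} (lt : Q → Q → Prop) : Q × Bool → Q × Bool → Prop :=
  fun x y =>
    (x.2 = false ∧ y.2 = true) ∨
    (lt x.1 y.1 ∧ x.2 = true ∧ y.2 = true) ∨
    (lt y.1 x.1 ∧ x.2 = false ∧ y.2 = false)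

/-- Planarity of a transition w.r.t. a direction map `ρ` and a strict total
order `lt`: no vertices `u < r < v < s` with an edge between `u` and `v`
(in either direction) and an edge between `r` and `s` (in either direction). -/
def IsPlanar {Q : Type} (ρ : Q → Bool) (lt : Q → Q → Prop) (f : Set (Q × Q)) : Prop :=
  ¬ ∃ u r v s : Q × Bool, ExtLt lt u r ∧ ExtLt lt r v ∧ ExtLt lt v s ∧
      (ProfileEdge ρ f u v ∨ ProfileEdge ρ f v u) ∧
      (ProfileEdge ρ f r s ∨ ProfileEdge ρ f s r)

/-- Deterministic transition: a partial function. -/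
def IsDet {Q : Type} (f : Set (Q × Q)) : Prop :=
  ∀ q r r', (q, r) ∈ f → (q, r') ∈ f → r = r'

/-- Reversible transition: a partial injection. -/
def IsRev {Q : Type} (f : Set (Q × Q)) : Prop :=
  IsDet f ∧ ∀ q q' r, (q, r) ∈ f → (q', r) ∈ f → q = q'

/-- Edges of the glued graph `C(ρ, f, g)` on `Q × Fin 3`, levels `0, 1, 2`
coding `-1, 0, 1`: the copy of `G(ρ,f)` lives on levels `{0,1}` (side `+1`
corresponding to level `1`) and the copy of `G(ρ,g)` on levels `{1,2}`
(side `+1` corresponding to level `2`). -/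
def GlueEdge {Q : Type} (ρ : Q → Bool) (f g : Set (Q × Q)) :
    Q × Fin 3 → Q × Fin 3 → Prop :=
  fun x y =>
    (x.2 ≠ 2 ∧ y.2 ≠ 2 ∧
      ProfileEdge ρ f (x.1, decide (x.2 = 1)) (y.1, decide (y.2 = 1))) ∨
    (x.2 ≠ 0 ∧ y.2 ≠ 0 ∧
      ProfileEdge ρ g (x.1, decide (x.2 = 2)) (y.1, decide (y.2 = 2)))

/-- Gluing composition `f * g` of transitions: `(q, r) ∈ f * g` iff there is a
directed path from `(q, -ρ q)` to `(r, ρ r)` in the glued graph `C(ρ, f, g)`. -/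
def glue {Q : Type} (ρ : Q → Bool) (f g : Set (Q × Q)) : Set (Q × Q) :=
  {p | Relation.ReflTransGen (GlueEdge ρ f g)
        (p.1, if ρ p.1 then (0 : Fin 3) else 2)
        (p.2, if ρ p.2 then (2 : Fin 3) else 0)}

/-- The identity transition, unit of the gluing composition. -/
def idRel (Q : Type) : Set (Q × Q) := {p | p.1 = p.2}

/-- Iterated gluing powers of a transition, with `glpow ρ f 0 = idRel Q`. -/
def glpow {Q : Type} (ρ : Q → Bool) (f : Set (Q × Q)) : ℕ → Set (Q × Q)
  | 0 => idRel Q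
  | n + 1 => glue ρ (glpow ρ f n) f

/-- A configuration of a two-way machine: the tape content to the left of the
head, the current state, and the tape content to the right of the head. -/
abbrev Config (Q A : Type) := List (Tape A) × Q × List (Tape A)

/-- The tape encoding `▷ u ◁` of an input word `u`. -/
def tapeOf {A : Type} (u : List A) : List (Tape A) :=
  Tape.lend :: (u.map Tape.sym ++ [Tape.rend])

/-- A two-way (nondeterministic) finite transducer. -/
structure TwoWayTransducer (Q A B : Type) where
  ρ : Q → Bool
  init : Q
  init_fwd : ρ init = true
  final : Set Q
  δ : Tape A → Set (Q × List B × Q)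

namespace TwoWayTransducer

variable {Q A B : Type}

/-- The transitions `⌊δ⌋(a)` of the underlying automaton. -/
def rel (T : TwoWayTransducer Q A B) (a : Tape A) : Set (Q × Q) :=
  {p | ∃ w, (p.1, w, p.2) ∈ T.δ a}

def Deterministic (T : TwoWayTransducer Q A B) : Prop :=
  ∀ a, IsDet (T.rel a)

def Reversible (T : TwoWayTransducer Q A B) : Prop :=
  ∀ a, IsRev (T.rel a)

def Planar (T : TwoWayTransducer Q A B) : Prop :=
  ∃ lt : Q → Q → Prop, IsStrictTotalOrder Q lt ∧
    ∀ a : A, IsPlanar T.ρ lt (T.rel (Tape.sym a))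

/-- One step of the two-way transducer, labelled by the output word. -/
def Step (T : TwoWayTransducer Q A B) (c : Config Q A) (w : List B)
    (c' : Config Q A) : Prop :=
  ∃ a u v q r, (q, w, r) ∈ T.δ a ∧
    ((T.ρ q = true ∧ T.ρ r = true ∧ c = (u, q, a :: v) ∧ c' = (u ++ [a], r, v)) ∨
     (T.ρ q = true ∧ T.ρ r = false ∧ c = (u, q, a :: v) ∧ c' = (u, r, a :: v)) ∨
     (T.ρ q = false ∧ T.ρ r = false ∧ c = (u ++ [a], q, v) ∧ c' = (u, r, a :: v)) ∨
     (T.ρ q = false ∧ T.ρ r = true ∧ c = (u ++ [a], q, v) ∧ c' = (u ++ [a], r, v)))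

/-- Multi-step runs, accumulating the concatenated output. -/
inductive Run (T : TwoWayTransducer Q A B) : Config Q A → List B → Config Q A → Prop
  | refl (c : Config Q A) : Run T c [] c
  | step {c₁ w₁ c₂ w₂ c₃} : Run T c₁ w₁ c₂ → T.Step c₂ w₂ c₃ → Run T c₁ (w₁ ++ w₂) c₃

/-- The pair `(u, v)` is realized by `T`. -/
def Realizes (T : TwoWayTransducer Q A B) (u : List A) (v : List B) : Prop :=
  ∃ qf ∈ T.final, T.Run ([], T.init, tapeOf u) v (tapeOf u, qf, [])

/-- `T` computes the partial function `f`. -/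
def Computes (T : TwoWayTransducer Q A B) (f : List A → Option (List B)) : Prop :=
  ∀ u v, f u = some v ↔ T.Realizes u v

end TwoWayTransducer

/-- Membership in the least submonoid of `B(Q,ρ)` containing the transitions
`⌊δ⌋(a)` for the input letters `a`. -/
inductive InBehav {Q A B : Type} (T : TwoWayTransducer Q A B) : Set (Q × Q) → Prop
  | one : InBehav T (idRel Q)
  | gen (a : A) : InBehav T (T.rel (Tape.sym a))
  | mul {f g} : InBehav T f → InBehav T g → InBehav T (glue T.ρ f g)

/-- The behaviour monoid `B(T)` is aperiodic. -/
def ApBehav {Q A B : Type} (T : TwoWayTransducer Q A B) : Prop :=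
  ∃ n : ℕ, ∀ f, InBehav T f → glpow T.ρ f (n + 1) = glpow T.ρ f n

/-- A first-order transduction: a partial function computed by some
deterministic two-way transducer whose behaviour monoid is aperiodic. -/
def IsFOTransduction {A B : Type} (f : List A → Option (List B)) : Prop :=
  ∃ (n : ℕ) (T : TwoWayTransducer (Fin n) A B),
    T.Deterministic ∧ ApBehav T ∧ T.Computes f

/-- A two-way (nondeterministic) finite automaton. -/
structure TwoWayAutomaton (Q A : Type) where
  ρ : Q → Bool
  init : Q
  init_fwd : ρ init = true
  final : Set Q
  δ : Tape A → Set (Q × Q)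

namespace TwoWayAutomaton

variable {Q A : Type}

def Deterministic (M : TwoWayAutomaton Q A) : Prop := ∀ a, IsDet (M.δ a)

def Reversible (M : TwoWayAutomaton Q A) : Prop := ∀ a, IsRev (M.δ a)

def Planar (M : TwoWayAutomaton Q A) : Prop :=
  ∃ lt : Q → Q → Prop, IsStrictTotalOrder Q lt ∧
    ∀ a : A, IsPlanar M.ρ lt (M.δ (Tape.sym a))

/-- One step of the two-way automaton. -/
def Step (M : TwoWayAutomaton Q A) (c c' : Config Q A) : Prop :=
  ∃ a u v q r, (q, r) ∈ M.δ a ∧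
    ((M.ρ q = true ∧ M.ρ r = true ∧ c = (u, q, a :: v) ∧ c' = (u ++ [a], r, v)) ∨
     (M.ρ q = true ∧ M.ρ r = false ∧ c = (u, q, a :: v) ∧ c' = (u, r, a :: v)) ∨
     (M.ρ q = false ∧ M.ρ r = false ∧ c = (u ++ [a], q, v) ∧ c' = (u, r, a :: v)) ∨
     (M.ρ q = false ∧ M.ρ r = true ∧ c = (u ++ [a], q, v) ∧ c' = (u ++ [a], r, v)))

def Accepts (M : TwoWayAutomaton Q A) (u : List A) : Prop :=
  ∃ qf ∈ M.final, Relation.ReflTransGen M.Step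
    ([], M.init, tapeOf u) (tapeOf u, qf, [])

def Language (M : TwoWayAutomaton Q A) : Set (List A) := {u | M.Accepts u}

end TwoWayAutomaton

/-- The underlying automaton `⌊T⌋` of a transducer `T`. -/
def forget {Q A B : Type} (T : TwoWayTransducer Q A B) : TwoWayAutomaton Q A :=
  { ρ := T.ρ, init := T.init, init_fwd := T.init_fwd, final := T.final,
    δ := fun a => T.rel a }

/-- Star-free languages: the smallest class containing all finite languages
and closed under finite union, complement and concatenation. -/
inductive StarFree {A : Type} : Set (List A) → Prop
  | of_finite (L : Set (List A)) : L.Finite → StarFree L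
  | union {L M : Set (List A)} : StarFree L → StarFree M → StarFree (L ∪ M)
  | compl {L : Set (List A)} : StarFree L → StarFree Lᶜ
  | concat {L M : Set (List A)} : StarFree L → StarFree M →
      StarFree {w | ∃ u ∈ L, ∃ v ∈ M, w = u ++ v}

/-- A (total, deterministic) sequential transducer. -/
structure SeqTransducer (Q A B : Type) where
  init : Q
  next : A → Q → Q
  out : A → Q → List B
  fin : Q → List B

namespace SeqTransducer

variable {Q A B : Type}

/-- Running a sequential transducer on a word from a state: final state and
produced output. -/
def run (T : SeqTransducer Q A B) : List A → Q → Q × List B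
  | [], q => (q, [])
  | a :: w, q =>
      let p := run T w (T.next a q)
      (p.1, T.out a q ++ p.2)

/-- The (total) sequential function computed by a sequential transducer. -/
def fn (T : SeqTransducer Q A B) (w : List A) : List B :=
  (T.run w T.init).2 ++ T.fin (T.run w T.init).1

end SeqTransducer

/-- Membership in the transition monoid of a sequential transducer, i.e. the
monoid of functions `Q → Q` generated by the `∂₁(a)`. -/
inductive SeqGen {Q A B : Type} (T : SeqTransducer Q A B) : (Q → Q) → Prop
  | id : SeqGen T id
  | gen (a : A) : SeqGen T (T.next a)
  | comp {h h'} : SeqGen T h → SeqGen T h' → SeqGen T (h ∘ h')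

/-- A sequential transducer is aperiodic when its transition monoid is. -/
def SeqTransducer.Aperiodic {Q A B : Type} (T : SeqTransducer Q A B) : Prop :=
  ∃ n : ℕ, ∀ h, SeqGen T h → h^[n + 1] = h^[n]

section Construction

variable {A B : Type}

/-- Letter types. -/
inductive LType where
  | I : LType
  | C : Fin 2 → LType
  | X : LType
deriving DecidableEq

/-- Type of a letter of a 2-state sequential transducer. -/
def ltypeOf (T : SeqTransducer (Fin 2) A B) (a : A) : LType :=
  if T.next a 0 = T.next a 1 then .C (T.next a 0)
  else if T.next a 0 = 0 then .I else .X

/-- Directions of the 5 states: 0 = F₀, 3 = F₁ (forward, emitting),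
1 = W₀, 4 = W₁ (backward walkers), 2 = S (forward skip). -/
def rho5 : Fin 5 → Bool := ![true, false, true, true, false]

def Fst : Fin 2 → Fin 5 := ![0, 3]
def Wst : Fin 2 → Fin 5 := ![1, 4]
def Gst : Fin 2 → Fin 5 := ![0, 2]

/-- Transition function (as a partial function) of the constructed two-way
transducer. -/
def df (T : SeqTransducer (Fin 2) A B) : Tape A → Fin 5 → Option (List B × Fin 5)
  | .lend => fun q =>
      if q = Fst T.init then some ([], Fst T.init)
      else if q = Wst T.init then some ([], 2) else none
  | .rend => ![some (T.fin 0, 0), none, none, some (T.fin 1, 2), none]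
  | .sym a =>
      match ltypeOf T a with
      | .I => ![some (T.out a 0, 0), some ([], 1), some ([], 2),
                some (T.out a 1, 3), some ([], 4)]
      | .C 0 => ![some (T.out a 0, 1), some ([], 2), some ([], 0),
                some (T.out a 1, 4), none]
      | .C 1 => ![some (T.out a 0, 1), none, some ([], 3),
                some (T.out a 1, 4), some ([], 2)]
      | .X => fun _ => none

/-- The constructed two-way transducer. -/
def mk5 (T : SeqTransducer (Fin 2) A B) : TwoWayTransducer (Fin 5) A B where
  ρ := rho5
  init := Fst T.init
  init_fwd := by
    have : ∀ m : Fin 2, rho5 (Fst m) = true := by decide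
    exact this T.init
  final := {0, 2}
  δ := fun a => {x | df T a x.1 = some x.2}

lemma mem_delta_iff (T : SeqTransducer (Fin 2) A B) (a : Tape A) (q r : Fin 5)
    (w : List B) : (q, w, r) ∈ (mk5 T).δ a ↔ df T a q = some (w, r) := Iff.rfl

lemma rel_iff (T : SeqTransducer (Fin 2) A B) (a : Tape A) (q r : Fin 5) :
    (q, r) ∈ (mk5 T).rel a ↔ (df T a q).map Prod.snd = some r := by
  simp only [TwoWayTransducer.rel, Set.mem_setOf_eq, mem_delta_iff]
  constructor
  · rintro ⟨w, hw⟩; simp [hw]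
  · intro h
    rcases h' : df T a q with _ | ⟨w, r'⟩
    · simp [h'] at h
    · refine ⟨w, ?_⟩
      simp [h'] at h; simp [h]

end Construction
section PlanRev

variable {A B : Type}

/-- The underlying-automaton transition, letter-type level. -/
def rOf : LType → Fin 5 → Option (Fin 5)
  | .I => ![some 0, some 1, some 2, some 3, some 4]
  | .C 0 => ![some 1, some 2, some 0, some 4, none]
  | .C 1 => ![some 1, none, some 3, some 4, some 2]
  | .X => fun _ => none

def rEnd : Fin 5 → Option (Fin 5) := ![some 0, none, none, some 2, none]

def rLend (i : Fin 2) (q : Fin 5) : Option (Fin 5) :=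
  if q = Fst i then some (Fst i) else if q = Wst i then some 2 else none

lemma df_snd (T : SeqTransducer (Fin 2) A B) (a : A) (q : Fin 5) :
    (df T (Tape.sym a) q).map Prod.snd = rOf (ltypeOf T a) q := by
  rcases h : ltypeOf T a with _ | c | _
  · fin_cases q <;> simp [df, rOf, h]
  · fin_cases c <;> fin_cases q <;> simp [df, rOf, h]
  · fin_cases q <;> simp [df, rOf, h]

lemma df_snd_rend (T : SeqTransducer (Fin 2) A B) (q : Fin 5) :
    (df T Tape.rend q).map Prod.snd = rEnd q := by
  fin_cases q <;> rfl

lemma df_snd_lend (T : SeqTransducer (Fin 2) A B) (q : Fin 5) :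
    (df T Tape.lend q).map Prod.snd = rLend T.init q := by
  show (if q = Fst T.init then some (([] : List B), Fst T.init)
      else if q = Wst T.init then some ([], (2:Fin 5)) else none).map Prod.snd
      = rLend T.init q
  unfold rLend
  split_ifs <;> rfl

lemma rel_sym (T : SeqTransducer (Fin 2) A B) (a : A) :
    (mk5 T).rel (Tape.sym a) = {p | rOf (ltypeOf T a) p.1 = some p.2} := by
  ext ⟨q, r⟩
  rw [Set.mem_setOf_eq, rel_iff, df_snd]

/-- The strict total order `0 < 1 < 2 < 4 < 3`. -/
def pos5 : Fin 5 → Fin 5 := ![0, 1, 2, 4, 3]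

def lt5 : Fin 5 → Fin 5 → Prop := fun q r => pos5 q < pos5 r

instance : DecidableRel lt5 := fun q r => by unfold lt5; infer_instance

lemma lt5_sto : IsStrictTotalOrder (Fin 5) lt5 where
  trichotomous := by decide
  irrefl := by decide
  trans := by decide

set_option synthInstance.maxSize 512 in
set_option synthInstance.maxHeartbeats 1000000 in
set_option maxHeartbeats 2000000 in
lemma planar_rOf (τ : LType) :
    IsPlanar rho5 lt5 {p : Fin 5 × Fin 5 | rOf τ p.1 = some p.2} := by
  have key : ∀ τ' : LType, (∀ q, rOf τ' q = rOf .I q) ∨ (∀ q, rOf τ' q = rOf (.C 0) q)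
      ∨ (∀ q, rOf τ' q = rOf (.C 1) q) ∨ (∀ q, rOf τ' q = rOf .X q) := by
    rintro (_ | c | _)
    · exact Or.inl fun _ => rfl
    · fin_cases c
      · exact Or.inr (Or.inl fun _ => rfl)
      · exact Or.inr (Or.inr (Or.inl fun _ => rfl))
    · exact Or.inr (Or.inr (Or.inr fun _ => rfl))
  have hset : ∀ τ₁ τ₂ : LType, (∀ q, rOf τ₁ q = rOf τ₂ q) →
      {p : Fin 5 × Fin 5 | rOf τ₁ p.1 = some p.2}
        = {p : Fin 5 × Fin 5 | rOf τ₂ p.1 = some p.2} := by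
    intro τ₁ τ₂ h; ext p; simp [h p.1]
  rcases key τ with h | h | h | h <;> rw [hset _ _ h] <;>
    · unfold IsPlanar ProfileEdge
      simp only [Set.mem_setOf_eq]
      unfold ExtLt
      decide

lemma mk5_planar (T : SeqTransducer (Fin 2) A B) : (mk5 T).Planar := by
  refine ⟨lt5, lt5_sto, fun a => ?_⟩
  rw [show (mk5 T).ρ = rho5 from rfl, rel_sym]
  exact planar_rOf _

lemma rOf_inj : ∀ τ q q' r, rOf τ q = some r → rOf τ q' = some r → q = q' := by
  rintro (_ | c | _)
  · decide
  · fin_cases c <;> decide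
  · decide

lemma rEnd_inj : ∀ q q' r, rEnd q = some r → rEnd q' = some r → q = q' := by decide

lemma rLend_inj : ∀ i q q' r, rLend i q = some r → rLend i q' = some r → q = q' := by
  decide

lemma mk5_reversible (T : SeqTransducer (Fin 2) A B) : (mk5 T).Reversible := by
  intro a
  constructor
  · intro q r r' h h'
    rw [rel_iff] at h h'
    rw [h] at h'; exact Option.some_injective _ h'
  · intro q q' r h h'
    rw [rel_iff] at h h'
    match a with
    | Tape.sym x =>
        rw [df_snd] at h h'; exact rOf_inj _ _ _ _ h h'
    | Tape.rend =>
        rw [df_snd_rend] at h h'; exact rEnd_inj _ _ _ h h'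
    | Tape.lend =>
        rw [df_snd_lend] at h h'; exact rLend_inj _ _ _ _ h h'

end PlanRev
section Runs

variable {A B : Type}

open TwoWayTransducer

lemma rho_F : ∀ m : Fin 2, rho5 (Fst m) = true := by decide
lemma rho_W : ∀ m : Fin 2, rho5 (Wst m) = false := by decide
lemma rho_G : ∀ m : Fin 2, rho5 (Gst m) = true := by decide
lemma rho_S : rho5 2 = true := rfl

lemma fin2_cases : ∀ m : Fin 2, m = 0 ∨ m = 1 := by decide
lemma fin2_ne0 : ∀ m : Fin 2, m ≠ 0 → m = 1 := by decide
lemma fin2_ne1 : ∀ m : Fin 2, m ≠ 1 → m = 0 := by decide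

section StepHelpers

variable {T : SeqTransducer (Fin 2) A B} {a : Tape A} {q r : Fin 5} {w : List B}
  {u v : List (Tape A)}

lemma step_ff (h : df T a q = some (w, r)) (hq : rho5 q = true)
    (hr : rho5 r = true) : (mk5 T).Step (u, q, a :: v) w (u ++ [a], r, v) :=
  ⟨a, u, v, q, r, h, Or.inl ⟨hq, hr, rfl, rfl⟩⟩

lemma step_ft (h : df T a q = some (w, r)) (hq : rho5 q = true)
    (hr : rho5 r = false) : (mk5 T).Step (u, q, a :: v) w (u, r, a :: v) :=
  ⟨a, u, v, q, r, h, Or.inr (Or.inl ⟨hq, hr, rfl, rfl⟩)⟩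

lemma step_bb (h : df T a q = some (w, r)) (hq : rho5 q = false)
    (hr : rho5 r = false) : (mk5 T).Step (u ++ [a], q, v) w (u, r, a :: v) :=
  ⟨a, u, v, q, r, h, Or.inr (Or.inr (Or.inl ⟨hq, hr, rfl, rfl⟩))⟩

lemma step_bf (h : df T a q = some (w, r)) (hq : rho5 q = false)
    (hr : rho5 r = true) : (mk5 T).Step (u ++ [a], q, v) w (u ++ [a], r, v) :=
  ⟨a, u, v, q, r, h, Or.inr (Or.inr (Or.inr ⟨hq, hr, rfl, rfl⟩))⟩

end StepHelpers

lemma run_single {T : SeqTransducer (Fin 2) A B} {c c' : Config (Fin 5) A}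
    {w : List B} (h : (mk5 T).Step c w c') : (mk5 T).Run c w c' := by
  have := Run.step (Run.refl (T := mk5 T) c) h
  simpa using this

lemma run_trans {T : SeqTransducer (Fin 2) A B} {c₁ c₂ c₃ : Config (Fin 5) A}
    {w₁ w₂ : List B} (h1 : (mk5 T).Run c₁ w₁ c₂) (h2 : (mk5 T).Run c₂ w₂ c₃) :
    (mk5 T).Run c₁ (w₁ ++ w₂) c₃ := by
  induction h2 with
  | refl => simpa using h1
  | step h s ih =>
      rw [← List.append_assoc]
      exact Run.step ih s

lemma run_congr {T : SeqTransducer (Fin 2) A B} {c c' d d' : Config (Fin 5) A}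
    {w : List B} (h : (mk5 T).Run c w d) (hc : c = c') (hd : d = d') :
    (mk5 T).Run c' w d' := hc ▸ hd ▸ h

section Eval

variable (T : SeqTransducer (Fin 2) A B) (a : A)

lemma dfI_F (h : ltypeOf T a = .I) (m : Fin 2) :
    df T (.sym a) (Fst m) = some (T.out a m, Fst m) := by
  rcases fin2_cases m with hm | hm <;> subst hm <;> simp [df, h] <;> rfl

lemma dfI_W (h : ltypeOf T a = .I) (m : Fin 2) :
    df T (.sym a) (Wst m) = some ([], Wst m) := by
  rcases fin2_cases m with hm | hm <;> subst hm <;> simp [df, h] <;> rfl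

lemma dfI_S (h : ltypeOf T a = .I) : df T (.sym a) 2 = some ([], 2) := by
  simp [df, h]

lemma dfC_F (c : Fin 2) (h : ltypeOf T a = .C c) (m : Fin 2) :
    df T (.sym a) (Fst m) = some (T.out a m, Wst m) := by
  rcases fin2_cases c with hc | hc <;> subst hc <;>
    rcases fin2_cases m with hm | hm <;> subst hm <;> simp [df, h] <;> rfl

lemma dfC_W (c : Fin 2) (h : ltypeOf T a = .C c) :
    df T (.sym a) (Wst c) = some ([], 2) := by
  rcases fin2_cases c with hc | hc <;> subst hc <;> simp [df, h] <;> rfl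

lemma dfC_S (c : Fin 2) (h : ltypeOf T a = .C c) :
    df T (.sym a) 2 = some ([], Fst c) := by
  rcases fin2_cases c with hc | hc <;> subst hc <;> simp [df, h] <;> rfl

lemma dfR (m : Fin 2) : df T .rend (Fst m) = some (T.fin m, Gst m) := by
  rcases fin2_cases m with hm | hm <;> subst hm <;> rfl

lemma dfL_F : df T .lend (Fst T.init) = some ([], Fst T.init) := by
  simp [df]

lemma dfL_W : df T .lend (Wst T.init) = some ([], 2) := by
  have : Wst T.init ≠ Fst T.init := by
    rcases fin2_cases T.init with h | h <;> rw [h] <;> decide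
  simp [df, this]

end Eval

section LtypeFacts

variable {T : SeqTransducer (Fin 2) A B} {a : A}

lemma no_X (hT : T.Aperiodic) (a : A) : ltypeOf T a ≠ .X := by
  intro h
  unfold ltypeOf at h
  by_cases h1 : T.next a 0 = T.next a 1
  · simp [h1] at h
  by_cases h2 : T.next a 0 = 0
  · have h1' : ¬((0:Fin 2) = T.next a 1) := h2 ▸ h1
    simp [h2, h1'] at h
  have hn0 : T.next a 0 = 1 := fin2_ne0 _ h2
  have hn1 : T.next a 1 = 0 := by
    rcases fin2_cases (T.next a 1) with h' | h'
    · exact h'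
    · exact absurd (hn0.trans h'.symm) h1
  obtain ⟨n, hn⟩ := hT
  have hx := congrFun (hn (T.next a) (SeqGen.gen a)) 0
  rw [Function.iterate_succ_apply'] at hx
  rcases fin2_cases ((T.next a)^[n] 0) with h' | h' <;> rw [h'] at hx
  · rw [hn0] at hx; exact absurd hx (by decide)
  · rw [hn1] at hx; exact absurd hx (by decide)

lemma next_of_I (h : ltypeOf T a = .I) (m : Fin 2) : T.next a m = m := by
  unfold ltypeOf at h
  by_cases h1 : T.next a 0 = T.next a 1
  · simp [h1] at h
  by_cases h2 : T.next a 0 = 0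
  swap
  · simp [h1, h2] at h
  have hn1 : T.next a 1 = 1 := by
    rcases fin2_cases (T.next a 1) with h' | h'
    · exact absurd (h2.trans h'.symm) h1
    · exact h'
  rcases fin2_cases m with hm | hm <;> subst hm <;> assumption

lemma next_of_C {c : Fin 2} (h : ltypeOf T a = .C c) (m : Fin 2) :
    T.next a m = c := by
  unfold ltypeOf at h
  by_cases h1 : T.next a 0 = T.next a 1
  · simp only [h1, if_pos] at h
    have hc := LType.C.inj h
    rcases fin2_cases m with hm | hm <;> subst hm
    · exact h1.trans hc
    · exact hc
  · by_cases h2 : T.next a 0 = 0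
    · have h1' : ¬((0:Fin 2) = T.next a 1) := h2 ▸ h1
      simp [h2, h1'] at h
    · have h2' : T.next a 0 = 1 := fin2_ne0 _ h2
      have h1' : ¬((1:Fin 2) = T.next a 1) := h2' ▸ h1
      simp [h2', h1'] at h

end LtypeFacts

section Walks

variable {T : SeqTransducer (Fin 2) A B}

lemma walkW (m : Fin 2) (w : List A) (hw : ∀ x ∈ w, ltypeOf T x = .I)
    (pre rest : List (Tape A)) :
    (mk5 T).Run (pre ++ w.map .sym, Wst m, rest) []
      (pre, Wst m, w.map .sym ++ rest) := by
  induction w using List.reverseRecOn generalizing rest with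
  | nil => simpa using Run.refl (T := mk5 T) _
  | append_singleton w' x ih =>
      have hx : ltypeOf T x = .I := hw x (by simp)
      have s1 : (mk5 T).Step ((pre ++ w'.map .sym) ++ [.sym x], Wst m, rest) []
          (pre ++ w'.map .sym, Wst m, .sym x :: rest) :=
        step_bb (dfI_W T x hx m) (rho_W m) (rho_W m)
      have r2 := ih (fun y hy => hw y (by simp [hy])) (.sym x :: rest)
      have := run_trans (run_single s1) r2
      simpa using this

lemma walkS (w : List A) (hw : ∀ x ∈ w, ltypeOf T x = .I)
    (pre rest : List (Tape A)) :
    (mk5 T).Run (pre, 2, w.map .sym ++ rest) []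
      (pre ++ w.map .sym, 2, rest) := by
  induction w generalizing pre with
  | nil => simpa using Run.refl (T := mk5 T) _
  | cons x w' ih =>
      have hx : ltypeOf T x = .I := hw x (by simp)
      have s1 : (mk5 T).Step (pre, 2, .sym x :: (w'.map .sym ++ rest)) []
          (pre ++ [.sym x], 2, w'.map .sym ++ rest) :=
        step_ff (dfI_S T x hx) rho_S rho_S
      have r2 := ih (fun y hy => hw y (by simp [hy])) (pre ++ [.sym x])
      have := run_trans (run_single s1) r2
      simpa using this

end Walks

end Runs
section Main

variable {A B : Type}

open TwoWayTransducer

/-- Invariant: the part of the input already processed ends with a (possibly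
empty) block of identity letters preceded by a reset to `m` (or nothing, with
`m` the initial state). -/
def SegInv (T : SeqTransducer (Fin 2) A B) (u₁ : List A) (m : Fin 2) : Prop :=
  ∃ v w, u₁ = v ++ w ∧ (∀ x ∈ w, ltypeOf T x = .I) ∧
    ((v = [] ∧ m = T.init) ∨ ∃ v' b, v = v' ++ [b] ∧ ltypeOf T b = .C m)

lemma main_run (T : SeqTransducer (Fin 2) A B) (hT : T.Aperiodic) :
    ∀ u₂ u₁ m, SegInv T u₁ m →
    (mk5 T).Run (Tape.lend :: u₁.map .sym, Fst m, u₂.map .sym ++ [Tape.rend])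
      ((T.run u₂ m).2 ++ T.fin (T.run u₂ m).1)
      (Tape.lend :: ((u₁ ++ u₂).map .sym ++ [Tape.rend]),
        Gst (T.run u₂ m).1, []) := by
  intro u₂
  induction u₂ with
  | nil =>
      intro u₁ m _
      have s := step_ff (u := Tape.lend :: u₁.map .sym) (v := [])
        (dfR T m) (rho_F m) (rho_G m)
      have := run_single s
      simpa [SeqTransducer.run] using this
  | cons a u₂ ih =>
      intro u₁ m hinv
      rcases hX : ltypeOf T a with _ | c | _
      · -- identity letter
        have s1 := step_ff (u := Tape.lend :: u₁.map .sym)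
          (v := u₂.map .sym ++ [Tape.rend]) (dfI_F T a hX m) (rho_F m) (rho_F m)
        have hinv' : SegInv T (u₁ ++ [a]) m := by
          obtain ⟨v, w, huv, hwI, hbound⟩ := hinv
          refine ⟨v, w ++ [a], by simp [huv], ?_, hbound⟩
          intro x hx
          rcases List.mem_append.1 hx with h | h
          · exact hwI x h
          · simp at h; subst h; exact hX
        have r2 := ih (u₁ ++ [a]) m hinv'
        have comb := run_trans (run_single s1) (run_congr r2 (by simp) rfl)
        have hout : T.run (a :: u₂) m
            = ((T.run u₂ m).1, T.out a m ++ (T.run u₂ m).2) := by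
          simp [SeqTransducer.run, next_of_I hX m]
        rw [hout]
        simpa [List.append_assoc] using comb
      · -- reset letter
        obtain ⟨v, w, huv, hwI, hbound⟩ := hinv
        subst huv
        -- step 1: emit and turn around
        have s1 := step_ft (u := Tape.lend :: (v ++ w).map .sym)
          (v := u₂.map .sym ++ [Tape.rend]) (dfC_F T a c hX m) (rho_F m) (rho_W m)
        -- step 2: walk left across the identity block
        have r2 := walkW (T := T) m w hwI (Tape.lend :: v.map .sym)
          (.sym a :: (u₂.map .sym ++ [Tape.rend]))
        -- step 3: turn around at the boundary
        have r3 : (mk5 T).Run (Tape.lend :: v.map .sym, Wst m,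
              w.map .sym ++ .sym a :: (u₂.map .sym ++ [Tape.rend])) []
            (Tape.lend :: v.map .sym, 2,
              w.map .sym ++ .sym a :: (u₂.map .sym ++ [Tape.rend])) := by
          rcases hbound with ⟨hv, hm⟩ | ⟨v', b, hv, hb⟩
          · subst hv; subst hm
            have s := step_bf (u := []) (a := Tape.lend)
              (v := w.map .sym ++ .sym a :: (u₂.map .sym ++ [Tape.rend]))
              (dfL_W (T := T)) (rho_W _) rho_S
            exact run_single (by simpa using s)
          · subst hv
            have s := step_bf (u := Tape.lend :: v'.map .sym) (a := .sym b)
              (v := w.map .sym ++ .sym a :: (u₂.map .sym ++ [Tape.rend]))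
              (dfC_W T b m hb) (rho_W _) rho_S
            exact run_single (by simpa using s)
        -- step 4: walk right across the identity block
        have r4 := walkS (T := T) w hwI (Tape.lend :: v.map .sym)
          (.sym a :: (u₂.map .sym ++ [Tape.rend]))
        -- step 5: cross the reset letter
        have s5 := step_ff (u := Tape.lend :: (v ++ w).map .sym)
          (v := u₂.map .sym ++ [Tape.rend]) (dfC_S T a c hX) rho_S (rho_F c)
        -- step 6: continue by induction
        have r6 := ih ((v ++ w) ++ [a]) c
          ⟨(v ++ w) ++ [a], [], by simp, by simp, Or.inr ⟨v ++ w, a, rfl, hX⟩⟩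
        have comb :=
          run_trans (run_single s1) (run_trans (by simpa using r2)
            (run_trans r3 (run_trans (by simpa using r4)
              (run_trans (run_single s5) (run_congr r6 (by simp) rfl)))))
        have hout : T.run (a :: u₂) m
            = ((T.run u₂ c).1, T.out a m ++ (T.run u₂ c).2) := by
          simp [SeqTransducer.run, next_of_C hX m]
        rw [hout]
        simpa [List.append_assoc] using comb
      · exact absurd hX (no_X hT a)

lemma canonical_run (T : SeqTransducer (Fin 2) A B) (hT : T.Aperiodic)
    (u : List A) :
    (mk5 T).Run ([], Fst T.init, tapeOf u) (T.fn u)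
      (tapeOf u, Gst (T.run u T.init).1, []) := by
  have s0 : (mk5 T).Step ([], Fst T.init, Tape.lend :: (u.map .sym ++ [Tape.rend]))
      [] ([Tape.lend], Fst T.init, u.map .sym ++ [Tape.rend]) := by
    have := step_ff (u := ([] : List (Tape A))) (v := u.map .sym ++ [Tape.rend])
      (dfL_F (T := T)) (rho_F _) (rho_F _)
    simpa using this
  have r1 := main_run T hT u [] T.init ⟨[], [], rfl, by simp, Or.inl ⟨rfl, rfl⟩⟩
  have comb := run_trans (run_single s0) r1
  have : T.fn u = (T.run u T.init).2 ++ T.fin (T.run u T.init).1 := rfl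
  rw [this]
  simpa [tapeOf] using comb

end Main
section Unique

variable {A B : Type}

open TwoWayTransducer

lemma step_det {T : SeqTransducer (Fin 2) A B} {c c₁ c₂ : Config (Fin 5) A}
    {w₁ w₂ : List B} (h1 : (mk5 T).Step c w₁ c₁) (h2 : (mk5 T).Step c w₂ c₂) :
    w₁ = w₂ ∧ c₁ = c₂ := by
  obtain ⟨a, u, v, q, r, hm, hc⟩ := h1
  obtain ⟨a', u', v', q', r', hm', hc'⟩ := h2
  rcases hc with ⟨hq, hr, rfl, rfl⟩ | ⟨hq, hr, rfl, rfl⟩ | ⟨hq, hr, rfl, rfl⟩ |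
      ⟨hq, hr, rfl, rfl⟩ <;>
    rcases hc' with ⟨hq', hr', hc2, rfl⟩ | ⟨hq', hr', hc2, rfl⟩ |
        ⟨hq', hr', hc2, rfl⟩ | ⟨hq', hr', hc2, rfl⟩ <;>
    simp only [Prod.mk.injEq] at hc2 <;>
    obtain ⟨hu, rfl, hl⟩ := hc2 <;>
    first
    | exact absurd hq' (by rw [hq]; decide)
    | (subst hu; injection hl with ha hv; subst ha; subst hv;
       have h3 := hm.symm.trans hm'
       injection h3 with h4; injection h4 with hw hrr; subst hw; subst hrr;
       first
       | exact ⟨rfl, rfl⟩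
       | exact absurd hr' (by rw [hr]; decide))
    | (subst hl;
       obtain ⟨h5, h6⟩ := List.append_inj' hu rfl;
       subst h5; injection h6 with ha _; subst ha;
       have h3 := hm.symm.trans hm'
       injection h3 with h4; injection h4 with hw hrr; subst hw; subst hrr;
       first
       | exact ⟨rfl, rfl⟩
       | exact absurd hr' (by rw [hr]; decide))

lemma nostep {T : SeqTransducer (Fin 2) A B} {t : List (Tape A)} {q : Fin 5}
    (hq : rho5 q = true) (w : List B) (c' : Config (Fin 5) A) :
    ¬ (mk5 T).Step (t, q, []) w c' := by
  rintro ⟨a, u, v, q', r, hm, hc⟩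
  rcases hc with ⟨hq', hr, hc, _⟩ | ⟨hq', hr, hc, _⟩ | ⟨hq', hr, hc, _⟩ |
      ⟨hq', hr, hc, _⟩ <;>
    simp only [Prod.mk.injEq] at hc <;>
    obtain ⟨h1, rfl, h3⟩ := hc <;>
    first
    | (simp at h3; done)
    | exact absurd hq' (by rw [show (mk5 T).ρ = rho5 from rfl, hq]; decide)

/-- Runs with steps accumulated at the front. -/
inductive RunL (T' : TwoWayTransducer (Fin 5) A B) :
    Config (Fin 5) A → List B → Config (Fin 5) A → Prop
  | refl (c) : RunL T' c [] c
  | cons {c w c' v d} : T'.Step c w c' → RunL T' c' v d → RunL T' c (w ++ v) d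

lemma RunL.snoc {T' : TwoWayTransducer (Fin 5) A B}
    {c c' c'' : Config (Fin 5) A} {w w₂ : List B} (h : RunL T' c w c')
    (hs : T'.Step c' w₂ c'') : RunL T' c (w ++ w₂) c'' := by
  induction h with
  | refl c => simpa using RunL.cons hs (RunL.refl _)
  | cons hstep htail ih =>
      rw [List.append_assoc]
      exact RunL.cons hstep (ih hs)

lemma run_to_runL {T' : TwoWayTransducer (Fin 5) A B}
    {c d : Config (Fin 5) A} {w : List B} (h : T'.Run c w d) : RunL T' c w d := by
  induction h with
  | refl => exact RunL.refl _
  | step h s ih => exact ih.snoc s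

lemma runL_unique {T : SeqTransducer (Fin 2) A B} {c d : Config (Fin 5) A}
    {v : List B} (h1 : RunL (mk5 T) c v d) :
    ∀ v' d', RunL (mk5 T) c v' d' →
      (∀ w e, ¬ (mk5 T).Step d w e) → (∀ w e, ¬ (mk5 T).Step d' w e) →
      v = v' ∧ d = d' := by
  induction h1 with
  | refl c =>
      intro v' d' h2 hd hd'
      cases h2 with
      | refl => exact ⟨rfl, rfl⟩
      | cons hs ht => exact absurd hs (hd _ _)
  | cons hs ht ih =>
      intro v' d' h2 hd hd'
      cases h2 with
      | refl => exact absurd hs (hd' _ _)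
      | cons hs' ht' =>
          obtain ⟨hw, hc⟩ := step_det hs hs'
          subst hw; subst hc
          obtain ⟨hv, hdd⟩ := ih _ _ ht' hd hd'
          exact ⟨by rw [hv], hdd⟩

lemma mk5_computes (T : SeqTransducer (Fin 2) A B) (hT : T.Aperiodic) :
    (mk5 T).Computes (fun w => some (T.fn w)) := by
  intro u v
  constructor
  · intro hv
    have hv' : v = T.fn u := (Option.some_inj.mp hv).symm
    subst hv'
    refine ⟨Gst (T.run u T.init).1, ?_, canonical_run T hT u⟩
    rcases fin2_cases ((T.run u T.init).1) with h | h <;> rw [h]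
    · exact Set.mem_insert _ _
    · exact Set.mem_insert_of_mem _ rfl
  · rintro ⟨qf, hqf, hrun⟩
    have h1 := run_to_runL (canonical_run T hT u)
    have h2 := run_to_runL hrun
    have hro : rho5 qf = true := by
      rcases hqf with rfl | hqf
      · rfl
      · rw [Set.mem_singleton_iff] at hqf; subst hqf; rfl
    have key := runL_unique h1 _ _ h2
      (fun w e => nostep (rho_G _) w e) (fun w e => nostep hro w e)
    exact congrArg some key.1
end Unique

/-- every total function computed by a 2-state aperiodic
sequential transducer is computed by a planar reversible two-way finite
transducer, which moreover can be taken with exactly 5 states. -/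
theorem two_state_aperiodic_to_planar_reversible {A B : Type}
    [Fintype A] [Fintype B] (T : SeqTransducer (Fin 2) A B)
    (hT : T.Aperiodic) :
    ∃ T' : TwoWayTransducer (Fin 5) A B,
      T'.Planar ∧ T'.Reversible ∧ T'.Computes (fun w => some (T.fn w)) := by
  exact ⟨mk5 T, mk5_planar T, mk5_reversible T, mk5_computes T hT⟩
end Planar2DFT
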